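/- Let H be a complex Hilbert space, η a bounded self-adjoint operator on H, and J₀ : H → H a conjugate-linear isometric involution (J₀∘J₀ = id) which commutes with η: J₀ ∘ η = η ∘ J₀. Set V := exp(i·η) (a unitary) and U := exp(i·η/2). Then: (i) V = U ∘ J₀ ∘ U* ∘ J₀, where U* = exp(−i·η/2) is the adjoint of U; (ii) J₀ ∘ V ∘ J₀ = V* = exp(−i·η). -/

import Mathlib

open NormedSpace ContinuousLinearMap in
/-- Modular Møller operator from a Hermitian phase. For a bounded
self-adjoint `η` and a conjugate-linear isometric involution `J₀` commuting with
`η`, setting `V := exp(iη)` and `U := exp(iη/2)`: (i) `V = U ∘ J₀ ∘ U* ∘ J₀` with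
`U* = adjoint U = exp(−iη/2)`; (ii) `J₀ ∘ V ∘ J₀ = V* = exp(−iη)`. -/
theorem stmt_8 {H : Type*} [NormedAddCommGroup H] [InnerProductSpace ℂ H] [CompleteSpace H]
    (η : H →L[ℂ] H) (hηsa : IsSelfAdjoint η)
    (J₀ : H → H)
    (hJinv : ∀ x : H, J₀ (J₀ x) = x)
    (hJadd : ∀ x y : H, J₀ (x + y) = J₀ x + J₀ y)
    (hJsmul : ∀ (c : ℂ) (x : H), J₀ (c • x) = (starRingEnd ℂ) c • J₀ x)
    (hJinner : ∀ x y : H, (inner ℂ (J₀ x) (J₀ y) : ℂ) = (starRingEnd ℂ) (inner ℂ x y : ℂ))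
    (hcomm : ∀ x : H, J₀ (η x) = η (J₀ x))
    (V U : H →L[ℂ] H)
    (hV : V = NormedSpace.exp (Complex.I • η))
    (hU : U = NormedSpace.exp ((Complex.I / 2) • η)) :
    -- the adjoint of U is exp(−iη/2)
    ContinuousLinearMap.adjoint U = NormedSpace.exp ((-(Complex.I / 2)) • η) ∧
    -- (i) V = U ∘ J₀ ∘ U* ∘ J₀
    (∀ x : H, V x = U (J₀ ((ContinuousLinearMap.adjoint U) (J₀ x)))) ∧
    -- (ii) J₀ ∘ V ∘ J₀ = V* = exp(−iη)
    (∀ x : H, J₀ (V (J₀ x)) = (ContinuousLinearMap.adjoint V) x) ∧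
    ContinuousLinearMap.adjoint V = NormedSpace.exp ((-Complex.I) • η) := by
  -- norm preservation
  have hnorm : ∀ x : H, ‖J₀ x‖ = ‖x‖ := by
    intro x
    have h : (inner ℂ (J₀ x) (J₀ x) : ℂ) = inner ℂ x x := by
      rw [hJinner, inner_conj_symm]
    rw [norm_eq_sqrt_re_inner (𝕜 := ℂ) (J₀ x), norm_eq_sqrt_re_inner (𝕜 := ℂ) x, h]
  -- J₀ as a real continuous linear map
  have hJ0 : J₀ 0 = 0 := by simpa using hJsmul 0 0
  let Jlin : H →ₗ[ℝ] H :=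
    { toFun := J₀
      map_add' := hJadd
      map_smul' := fun r x => by
        show J₀ (r • x) = r • J₀ x
        rw [← algebraMap_smul ℂ r x, hJsmul]
        simp [Complex.conj_ofReal, algebraMap_smul] }
  let Jr : H →L[ℝ] H := Jlin.mkContinuous 1 (fun x => by simp [Jlin, hnorm])
  have hJr : ∀ x : H, Jr x = J₀ x := fun _ => rfl
  -- powers commute
  have hpow : ∀ (c : ℂ) (n : ℕ) (x : H),
      J₀ (((c • η) ^ n) x) = (((starRingEnd ℂ) c • η) ^ n) (J₀ x) := by
    intro c n
    induction n with
    | zero => simp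
    | succ n ih =>
      intro x
      rw [pow_succ, pow_succ]
      simp only [ContinuousLinearMap.mul_apply, ContinuousLinearMap.smul_apply]
      rw [ih, hJsmul, hcomm]
  -- key commutation with exp
  have hkey : ∀ (c : ℂ) (x : H),
      J₀ (NormedSpace.exp (c • η) x) = NormedSpace.exp ((starRingEnd ℂ) c • η) (J₀ x) := by
    intro c x
    have hs := expSeries_summable' (𝕂 := ℂ) (c • η)
    have h1 : NormedSpace.exp (c • η) x
        = ∑' n : ℕ, ((n.factorial : ℂ)⁻¹ • (c • η) ^ n) x := by
      rw [exp_eq_tsum ℂ]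
      exact ((ContinuousLinearMap.apply ℂ H x).map_tsum hs)
    have h2 : NormedSpace.exp ((starRingEnd ℂ) c • η) (J₀ x)
        = ∑' n : ℕ, ((n.factorial : ℂ)⁻¹ • ((starRingEnd ℂ) c • η) ^ n) (J₀ x) := by
      rw [exp_eq_tsum ℂ]
      exact ((ContinuousLinearMap.apply ℂ H (J₀ x)).map_tsum
        (expSeries_summable' (𝕂 := ℂ) ((starRingEnd ℂ) c • η)))
    rw [h1, h2]
    have hs' : Summable fun n : ℕ => ((n.factorial : ℂ)⁻¹ • (c • η) ^ n) x :=
      hs.map (ContinuousLinearMap.apply ℂ H x) (ContinuousLinearMap.apply ℂ H x).continuous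
    calc J₀ (∑' n : ℕ, ((n.factorial : ℂ)⁻¹ • (c • η) ^ n) x)
        = ∑' n : ℕ, J₀ (((n.factorial : ℂ)⁻¹ • (c • η) ^ n) x) := Jr.map_tsum hs'
      _ = ∑' n : ℕ, ((n.factorial : ℂ)⁻¹ • ((starRingEnd ℂ) c • η) ^ n) (J₀ x) := by
          refine tsum_congr fun n => ?_
          rw [ContinuousLinearMap.smul_apply, hJsmul, hpow,
            ContinuousLinearMap.smul_apply]
          simp
  -- adjoint of exp
  have hstar : ∀ c : ℂ, ContinuousLinearMap.adjoint (NormedSpace.exp (c • η))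
      = NormedSpace.exp ((starRingEnd ℂ) c • η) := by
    intro c
    rw [← ContinuousLinearMap.star_eq_adjoint, star_exp, star_smul, hηsa.star_eq]
    rfl
  have hconjI2 : (starRingEnd ℂ) (Complex.I / 2) = -(Complex.I / 2) := by
    simp [map_div₀, Complex.conj_I, neg_div, map_ofNat]
  have hAdjU : ContinuousLinearMap.adjoint U = NormedSpace.exp ((-(Complex.I / 2)) • η) := by
    rw [hU, hstar, hconjI2]
  have hAdjV : ContinuousLinearMap.adjoint V = NormedSpace.exp ((-Complex.I) • η) := by
    rw [hV, hstar, Complex.conj_I]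
  refine ⟨hAdjU, ?_, ?_, hAdjV⟩
  · intro x
    rw [hAdjU]
    have := hkey (-(Complex.I / 2)) (J₀ x)
    rw [hJinv] at this
    rw [this, hU]
    have hadd : NormedSpace.exp ((Complex.I / 2) • η)
        (NormedSpace.exp ((starRingEnd ℂ) (-(Complex.I / 2)) • η) x)
        = NormedSpace.exp (Complex.I • η) x := by
      have hc : (starRingEnd ℂ) (-(Complex.I / 2)) = Complex.I / 2 := by
        simp [map_div₀, Complex.conj_I, neg_div, map_ofNat]
      rw [hc]
      have : ((Complex.I / 2) • η) + ((Complex.I / 2) • η) = Complex.I • η := by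
        rw [← add_smul]; ring_nf
      let +nondep instQ : NormedAlgebra ℚ (H →L[ℂ] H) := .restrictScalars ℚ ℂ (H →L[ℂ] H)
      rw [← this, exp_add_of_commute (Commute.refl _)]
      rfl
    rw [hadd, ← hV]
  · intro x
    rw [hV, hkey, hJinv, Complex.conj_I, hstar, Complex.conj_I]
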